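/- Let G be a graph on [n] that has the interval property with respect to its labeling. Then every induced path i_0, i_1, …, i_l in G with l ≥ 1 is monotone: either i_0 < i_1 < ⋯ < i_l or i_0 > i_1 > ⋯ > i_l. -/

import Mathlib

open SimpleGraph

/-- `G` has the interval property with respect to its labeling: for every edge `{i,j}`
with `i < j`, every pair `{k,l}` with `i ≤ k < l ≤ j` is an edge of `G`. -/
def HasIntervalProperty {n : ℕ} (G : SimpleGraph (Fin n)) : Prop :=
  ∀ i j k l : Fin n, G.Adj i j → i < j → i ≤ k → k < l → l ≤ j → G.Adj k l

/-- The bipartite graph `in_lex(G)` on `{x_1,…,x_n} ∪ {y_1,…,y_n}` (here `Sum.inl i = x_i`,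
`Sum.inr j = y_j`) whose edges are the pairs `{x_i, y_j}` with `i < j` and `{i,j} ∈ E(G)`. -/
def inLex {n : ℕ} (G : SimpleGraph (Fin n)) : SimpleGraph (Fin n ⊕ Fin n) :=
  SimpleGraph.fromRel (fun u v =>
    ∃ i j : Fin n, i < j ∧ G.Adj i j ∧ u = Sum.inl i ∧ v = Sum.inr j)

/-- `M` is an induced matching of `H`: a set of edges of `H`, pairwise vertex-disjoint,
such that no edge of `H` joins two vertices lying in distinct edges of `M`. -/
def IsInducedMatching {V : Type*} (H : SimpleGraph V) (M : Set (Sym2 V)) : Prop :=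
  M ⊆ H.edgeSet ∧
  (∀ e ∈ M, ∀ f ∈ M, e ≠ f → ∀ v, v ∈ e → v ∉ f) ∧
  (∀ e ∈ M, ∀ f ∈ M, e ≠ f → ∀ u ∈ e, ∀ v ∈ f, ¬ H.Adj u v)

/-- An indexed family of `m` pairwise distinct edges forming an induced matching of `H`. -/
def IsInducedMatchingFamily {V : Type*} (H : SimpleGraph V) {m : ℕ} (f : Fin m → Sym2 V) : Prop :=
  Function.Injective f ∧ IsInducedMatching H (Set.range f)

/-- `p` is an induced path of length `l` in `G`: `l+1` distinct vertices such that the edges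
of `G` among them are exactly the consecutive pairs. -/
def IsInducedPath {V : Type*} (G : SimpleGraph V) (l : ℕ) (p : Fin (l + 1) → V) : Prop :=
  Function.Injective p ∧
  ∀ a b : Fin (l + 1), G.Adj (p a) (p b) ↔ ((a : ℕ) + 1 = b ∨ (b : ℕ) + 1 = a)

/-- `c` is an induced cycle of length `k` in `H`: `k` distinct vertices such that the edges
of `H` among them are exactly the consecutive pairs (cyclically). -/
def IsInducedCycle {V : Type*} (H : SimpleGraph V) (k : ℕ) (c : Fin k → V) : Prop :=
  3 ≤ k ∧ Function.Injective c ∧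
  ∀ a b : Fin k, H.Adj (c a) (c b) ↔ (((a : ℕ) + 1) % k = b ∨ ((b : ℕ) + 1) % k = a)

/-- Condition (∗) for an induced matching `{x_{i t}, y_{j t}}` of `in_lex(G)`: for every
index `a` and vertex `t < i a` with `{t, j a} ∈ E(G)`, replacing `x_{i a}` by `x_t`
does not yield an induced matching of `in_lex(G)`. -/
def CondStar {n m : ℕ} (G : SimpleGraph (Fin n)) (i j : Fin m → Fin n) : Prop :=
  ∀ a : Fin m, ∀ t : Fin n, t < i a → G.Adj t (j a) →
    ¬ IsInducedMatchingFamily (inLex G)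
        (fun u => if u = a then s(Sum.inl t, Sum.inr (j u))
                  else s(Sum.inl (i u), Sum.inr (j u)))

/-- If `G` has the interval property, then every induced path in `G` of length at least 1
is monotone: strictly increasing or strictly decreasing. -/
theorem stmt_4 {n : ℕ} (G : SimpleGraph (Fin n)) (hG : HasIntervalProperty G)
    (l : ℕ) (hl : 1 ≤ l) (p : Fin (l + 1) → Fin n) (hp : IsInducedPath G l p) :
    StrictMono p ∨ StrictAnti p := by
  obtain ⟨hinj, hadj⟩ := hp
  -- adjacency of consecutive vertices
  have hcons : ∀ k (hk : k + 1 ≤ l), G.Adj (p ⟨k, by omega⟩) (p ⟨k + 1, by omega⟩) := by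
    intro k hk
    exact (hadj ⟨k, by omega⟩ ⟨k + 1, by omega⟩).2 (Or.inl rfl)
  -- non-adjacency of vertices two apart
  have hskip : ∀ k (hk : k + 2 ≤ l), ¬ G.Adj (p ⟨k, by omega⟩) (p ⟨k + 2, by omega⟩) := by
    intro k hk h
    have := (hadj ⟨k, by omega⟩ ⟨k + 2, by omega⟩).1 h
    simp only at this
    omega
  have hne : ∀ (a b : Fin (l+1)), a ≠ b → p a ≠ p b := by
    intro a b hab h; exact hab (hinj h)
  -- increasing step
  have stepM : ∀ k (hk : k + 2 ≤ l),
      p ⟨k, by omega⟩ < p ⟨k + 1, by omega⟩ → p ⟨k + 1, by omega⟩ < p ⟨k + 2, by omega⟩ := by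
    intro k hk hlt
    set a : Fin (l+1) := ⟨k, by omega⟩
    set b : Fin (l+1) := ⟨k + 1, by omega⟩
    set c : Fin (l+1) := ⟨k + 2, by omega⟩
    have hbc : G.Adj (p b) (p c) := hcons (k+1) (by omega)
    have hac : ¬ G.Adj (p a) (p c) := hskip k hk
    rcases lt_trichotomy (p b) (p c) with h | h | h
    · exact h
    · exact absurd (hinj h) (by simp [a, b, c, Fin.ext_iff])
    · exfalso
      rcases lt_trichotomy (p a) (p c) with h2 | h2 | h2
      · exact hac (hG (p a) (p b) (p a) (p c) (hcons k (by omega)) hlt le_rfl h2 h.le)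
      · exact hne a c (by simp [a, c, Fin.ext_iff]) h2
      · exact hac ((hG (p c) (p b) (p c) (p a) hbc.symm h le_rfl h2 hlt.le).symm)
  -- decreasing step
  have stepA : ∀ k (hk : k + 2 ≤ l),
      p ⟨k + 1, by omega⟩ < p ⟨k, by omega⟩ → p ⟨k + 2, by omega⟩ < p ⟨k + 1, by omega⟩ := by
    intro k hk hlt
    set a : Fin (l+1) := ⟨k, by omega⟩
    set b : Fin (l+1) := ⟨k + 1, by omega⟩
    set c : Fin (l+1) := ⟨k + 2, by omega⟩
    have hbc : G.Adj (p b) (p c) := hcons (k+1) (by omega)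
    have hac : ¬ G.Adj (p a) (p c) := hskip k hk
    rcases lt_trichotomy (p c) (p b) with h | h | h
    · exact h
    · exact absurd (hinj h) (by simp [a, b, c, Fin.ext_iff])
    · exfalso
      rcases lt_trichotomy (p c) (p a) with h2 | h2 | h2
      · exact hac ((hG (p b) (p a) (p c) (p a) (hcons k (by omega)).symm hlt h.le h2 le_rfl).symm)
      · exact hne a c (by simp [a, c, Fin.ext_iff]) h2.symm
      · exact hac (hG (p b) (p c) (p a) (p c) hbc h hlt.le h2 le_rfl)
  have h01 : G.Adj (p ⟨0, by omega⟩) (p ⟨1, by omega⟩) := hcons 0 (by omega)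
  rcases lt_trichotomy (p ⟨0, by omega⟩) (p ⟨1, by omega⟩) with h0 | h0 | h0
  · left
    have key : ∀ k (hk : k + 1 ≤ l), p ⟨k, by omega⟩ < p ⟨k + 1, by omega⟩ := by
      intro k
      induction k with
      | zero => intro _; exact h0
      | succ m ih => intro hk; exact stepM m (by omega) (ih (by omega))
    intro x y hxy
    have mono : ∀ d (hle : (x : ℕ) + d + 1 ≤ l), p x < p ⟨(x : ℕ) + d + 1, by omega⟩ := by
      intro d
      induction d with
      | zero =>
        intro hle
        have := key x hle
        convert this using 2 <;> simp [Fin.ext_iff]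
      | succ m ih =>
        intro hle
        exact lt_trans (ih (by omega)) (by
          have := key ((x : ℕ) + m + 1) (by omega)
          convert this using 2; rfl; simp [Fin.ext_iff]; omega)
    have hy : (y : ℕ) = (x : ℕ) + ((y : ℕ) - (x : ℕ) - 1) + 1 := by
      have := Fin.lt_iff_val_lt_val.1 hxy; omega
    have := mono ((y : ℕ) - (x : ℕ) - 1) (by have hy2 := y.isLt; omega)
    convert this using 2
    rfl
    simp [Fin.ext_iff]; omega
  · exact absurd h0 (hne ⟨0, by omega⟩ ⟨1, by omega⟩ (by simp [Fin.ext_iff]))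
  · right
    have key : ∀ k (hk : k + 1 ≤ l), p ⟨k + 1, by omega⟩ < p ⟨k, by omega⟩ := by
      intro k
      induction k with
      | zero => intro _; exact h0
      | succ m ih => intro hk; exact stepA m (by omega) (ih (by omega))
    intro x y hxy
    have mono : ∀ d (hle : (x : ℕ) + d + 1 ≤ l), p ⟨(x : ℕ) + d + 1, by omega⟩ < p x := by
      intro d
      induction d with
      | zero =>
        intro hle
        have := key x hle
        convert this using 2 <;> simp [Fin.ext_iff]
      | succ m ih =>
        intro hle
        exact lt_trans (by
          have := key ((x : ℕ) + m + 1) (by omega)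
          convert this using 2; rfl; simp [Fin.ext_iff]; omega) (ih (by omega))
    have hy : (y : ℕ) = (x : ℕ) + ((y : ℕ) - (x : ℕ) - 1) + 1 := by
      have := Fin.lt_iff_val_lt_val.1 hxy; omega
    have := mono ((y : ℕ) - (x : ℕ) - 1) (by have hy2 := y.isLt; omega)
    convert this using 2
    rfl
    simp [Fin.ext_iff]; omega
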